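/- arXiv:2210.08691 — 3 statements merged into one kernel-verified Lean document; each statement's English description precedes it below -/
import Mathlib

section
/- Let A be a semiperfect ring and M a finitely generated A-module. If the natural surjection M → M/JM (where J is the Jacobson radical of A) factors through a projective A-module, then M is projective. -/
open CategoryTheory Limits Opposite

universe u

noncomputable section

namespace Paper

variable (A : Type u) [Ring A]

/-- The `i`-th Ext group `Ext_A^i(M,N)` vanishes. -/
def extVanish (M N : ModuleCat.{u} A) (i : ℕ) : Prop :=
  Subsingleton (((Ext ℤ (ModuleCat.{u} A) i).obj (op M)).obj N)

/-- Projective dimension at most `d`, characterized by Ext vanishing. -/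
def projDimLE (M : ModuleCat.{u} A) (d : ℕ) : Prop :=
  ∀ (N : ModuleCat.{u} A) (i : ℕ), d < i → extVanish A M N i

/-- Projective dimension, as an element of `ℕ∞` (`⊤` if infinite). -/
def projDim (M : ModuleCat.{u} A) : ℕ∞ :=
  sInf {c : ℕ∞ | ∃ d : ℕ, c = d ∧ projDimLE A M d}

/-- Injective dimension at most `d`, characterized by Ext vanishing. -/
def injDimLE (N : ModuleCat.{u} A) (d : ℕ) : Prop :=
  ∀ (M : ModuleCat.{u} A) (i : ℕ), d < i → extVanish A M N i

/-- Injective dimension, as an element of `ℕ∞` (`⊤` if infinite). -/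
def injDim (N : ModuleCat.{u} A) : ℕ∞ :=
  sInf {c : ℕ∞ | ∃ d : ℕ, c = d ∧ injDimLE A N d}

/-- (Left) global dimension. -/
def glDim : ℕ∞ := ⨆ M : ModuleCat.{u} A, projDim A M

/-- `p : P →ₗ[A] M` is a projective cover: `P` is projective, `p` is surjective and
its kernel is superfluous (small) in `P`. -/
def IsProjectiveCover {M P : Type u} [AddCommGroup M] [Module A M]
    [AddCommGroup P] [Module A P] (p : P →ₗ[A] M) : Prop :=
  Module.Projective A P ∧ Function.Surjective p ∧
    ∀ N : Submodule A P, N ⊔ LinearMap.ker p = ⊤ → N = ⊤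

/-- A ring is semiperfect if every finitely generated (left) module admits a
projective cover. -/
def IsSemiperfectRing : Prop :=
  ∀ (M : Type u) (_ : AddCommGroup M) (_ : Module A M), Module.Finite A M →
    ∃ (P : Type u) (_ : AddCommGroup P) (_ : Module A P) (p : P →ₗ[A] M),
      IsProjectiveCover A p

/-- The Jacobson radical of the ring `A`. -/
def jac : Ideal A := (⊥ : Ideal A).jacobson

/-- `p : P ⟶ M` in `ModuleCat A` is a projective cover. -/
def IsProjectiveCoverHom {P M : ModuleCat.{u} A} (p : P ⟶ M) : Prop :=
  Projective P ∧ Function.Surjective p ∧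
    ∀ N : Submodule A P, N ⊔ LinearMap.ker p.hom = ⊤ → N = ⊤

/-- `IsSyzygy n M K` : `K` is an `n`-th syzygy of `M` with respect to a minimal
projective resolution (built from projective covers). -/
def IsSyzygy : ℕ → ModuleCat.{u} A → ModuleCat.{u} A → Prop
  | 0, M, K => Nonempty (K ≅ M)
  | n + 1, M, K => ∃ (P : ModuleCat.{u} A) (p : P ⟶ M), IsProjectiveCoverHom A p ∧
      IsSyzygy n (ModuleCat.of A (LinearMap.ker p.hom)) K

/-- Dominant dimension at least `n`: there is an injective coresolution whose first
`n` terms are projective-injective (equivalently, the first `n` terms of the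
minimal injective coresolution are projective). -/
def DomDimGE : ℕ → ModuleCat.{u} A → Prop
  | 0, _ => True
  | n + 1, M => ∃ (I : ModuleCat.{u} A) (f : M ⟶ I), Injective I ∧ Projective I ∧
      Mono f ∧ DomDimGE n (cokernel f)

/-- Dominant dimension. -/
def domDim (M : ModuleCat.{u} A) : ℕ∞ :=
  sSup {c : ℕ∞ | ∃ n : ℕ, c = n ∧ DomDimGE A n M}

/-- Codominant dimension at least `n` (dual to dominant dimension, via projective
resolutions with projective-injective terms). -/
def CodomDimGE : ℕ → ModuleCat.{u} A → Prop
  | 0, _ => True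
  | n + 1, M => ∃ (P : ModuleCat.{u} A) (f : P ⟶ M), Projective P ∧ Injective P ∧
      Epi f ∧ CodomDimGE n (kernel f)

/-- Codominant dimension. -/
def codomDim (M : ModuleCat.{u} A) : ℕ∞ :=
  sSup {c : ℕ∞ | ∃ n : ℕ, c = n ∧ CodomDimGE A n M}

/-- A module is Gorenstein injective if it is a cycle of an acyclic complex of
injectives which stays acyclic after applying `Hom(I,-)` for every injective `I`. -/
def GorensteinInjective (N : ModuleCat.{u} A) : Prop :=
  ∃ C : CochainComplex (ModuleCat.{u} A) ℤ,
    (∀ n : ℤ, Injective (C.X n)) ∧ (∀ n : ℤ, C.ExactAt n) ∧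
    Nonempty (N ≅ kernel (C.d 0 1)) ∧
    ∀ (I : ModuleCat.{u} A), Injective I → ∀ n : ℤ,
      ((((preadditiveCoyoneda.obj (op I)).mapHomologicalComplex
        (ComplexShape.up ℤ)).obj C).ExactAt n)

/-- Gorenstein injective dimension at most `d`: there is a coresolution of length
at most `d` by Gorenstein injective modules. -/
def GinjDimLE : ℕ → ModuleCat.{u} A → Prop
  | 0, N => GorensteinInjective A N
  | n + 1, N => GorensteinInjective A N ∨
      ∃ (G : ModuleCat.{u} A) (f : N ⟶ G), GorensteinInjective A G ∧ Mono f ∧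
        GinjDimLE n (cokernel f)

/-- Gorenstein injective dimension, as an element of `ℕ∞`. -/
def ginjDim (N : ModuleCat.{u} A) : ℕ∞ :=
  sInf {c : ℕ∞ | ∃ d : ℕ, c = d ∧ GinjDimLE A d N}

/-- Finitistic projective dimension: the supremum of the projective dimensions of
finitely generated modules of finite projective dimension. -/
def fpDim : ℕ∞ :=
  sSup {c : ℕ∞ | ∃ M : ModuleCat.{u} A, Module.Finite A M ∧ projDim A M = c ∧ c ≠ ⊤}

/-- Finitistic injective dimension: the supremum of the injective dimensions of
finitely generated modules of finite injective dimension. -/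
def fiDim : ℕ∞ :=
  sSup {c : ℕ∞ | ∃ M : ModuleCat.{u} A, Module.Finite A M ∧ injDim A M = c ∧ c ≠ ⊤}

/-- A ring is connected (indecomposable) if it is nontrivial and has no nontrivial
central idempotents. -/
def RingConnected : Prop :=
  Nontrivial A ∧ ∀ e : A, IsIdempotentElem e → e ∈ Subring.center A → e = 0 ∨ e = 1

/-- Iwanaga-Gorenstein: noetherian on both sides, with finite self-injective
dimension on both sides. -/
def IsIwanagaGorenstein : Prop :=
  IsNoetherianRing A ∧ IsNoetherianRing Aᵐᵒᵖ ∧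
    injDim A (ModuleCat.of A A) ≠ ⊤ ∧ injDim Aᵐᵒᵖ (ModuleCat.of Aᵐᵒᵖ Aᵐᵒᵖ) ≠ ⊤

/-- Minimal Auslander-Gorenstein: Iwanaga-Gorenstein with `inj dim A ≤ dom dim A`. -/
def IsMinimalAuslanderGorenstein : Prop :=
  IsIwanagaGorenstein A ∧ injDim A (ModuleCat.of A A) ≤ domDim A (ModuleCat.of A A)

section NakAux


variable {A : Type u} [Ring A] {M : Type u} [AddCommGroup M] [Module A M]

lemma jac_mul_mem' {a : A} (ha : a ∈ ((⊥ : Ideal A).jacobson)) (c : A) :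
    a * c ∈ ((⊥ : Ideal A).jacobson) :=
  Ideal.mul_mem_right c _ ha

lemma jac_left_inv {a : A} (ha : a ∈ ((⊥ : Ideal A).jacobson)) :
    ∃ z : A, z * (1 - a) = 1 := by
  obtain ⟨z, hz⟩ := Ideal.mem_jacobson_iff.mp ha (-1)
  rw [Ideal.mem_bot, sub_eq_zero] at hz
  rw [mul_neg_one, neg_mul] at hz
  refine ⟨z, ?_⟩
  rw [mul_sub, mul_one, sub_eq_neg_add]
  exact hz

lemma nak_span (s : Finset M)
    (h : Submodule.span A (s : Set M) ≤ ((⊥ : Ideal A).jacobson) • Submodule.span A (s : Set M)) :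
    Submodule.span A (s : Set M) = ⊥ := by
  classical
  induction s using Finset.induction_on with
  | empty => simp
  | @insert x t hxt ih =>
    have hxmem : x ∈ ((⊥ : Ideal A).jacobson) •
        (Submodule.span A {x} ⊔ Submodule.span A (t : Set M)) := by
      rw [← Submodule.span_insert, ← Finset.coe_insert]
      exact h (Submodule.subset_span (by simp))
    rw [Submodule.smul_sup] at hxmem
    obtain ⟨u, hu, v, hv, huv⟩ := Submodule.mem_sup.mp hxmem
    have hu' : ∃ a ∈ ((⊥ : Ideal A).jacobson), a • x = u := by
      refine Submodule.smul_induction_on hu ?_ ?_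
      · intro r hr n hn
        obtain ⟨c, rfl⟩ := Submodule.mem_span_singleton.mp hn
        exact ⟨r * c, jac_mul_mem' hr c, by rw [mul_smul]⟩
      · rintro y z ⟨a, ha, rfl⟩ ⟨b, hb, rfl⟩
        exact ⟨a + b, add_mem ha hb, by rw [add_smul]⟩
    obtain ⟨a, haJ, rfl⟩ := hu'
    have hv' : (1 - a) • x = v := by
      rw [sub_smul, one_smul, sub_eq_iff_eq_add']; exact huv.symm
    obtain ⟨z, hz⟩ := jac_left_inv haJ
    have hxt' : x ∈ Submodule.span A (t : Set M) := by
      have : x = z • v := by rw [← hv', ← mul_smul, hz, one_smul]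
      rw [this]
      exact Submodule.smul_mem _ z (Submodule.smul_le_right hv)
    have hspan : Submodule.span A ((insert x t : Finset M) : Set M)
        = Submodule.span A (t : Set M) := by
      rw [Finset.coe_insert, Submodule.span_insert_eq_span hxt']
    rw [hspan] at h ⊢
    exact ih h

lemma nak_bot {N : Submodule A M} (hN : N.FG)
    (h : N ≤ ((⊥ : Ideal A).jacobson) • N) : N = ⊥ := by
  obtain ⟨s, rfl⟩ := hN
  exact nak_span s h

lemma nak_top [Module.Finite A M] {N : Submodule A M}
    (h : N ⊔ ((⊥ : Ideal A).jacobson) • (⊤ : Submodule A M) = ⊤) : N = ⊤ := by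
  rw [← Submodule.Quotient.subsingleton_iff]
  have htop : (⊤ : Submodule A (M ⧸ N)) ≤ ((⊥ : Ideal A).jacobson) • (⊤ : Submodule A (M ⧸ N)) := by
    have hmap := congrArg (Submodule.map N.mkQ) h
    rw [Submodule.map_sup, Submodule.map_smul'', Submodule.map_top, Submodule.range_mkQ] at hmap
    have hNbot : Submodule.map N.mkQ N = ⊥ := by
      rw [eq_bot_iff]
      rintro y ⟨x, hx, rfl⟩
      simp only [Submodule.mem_bot, Submodule.mkQ_apply, Submodule.Quotient.mk_eq_zero]
      exact hx
    rw [hNbot, bot_sup_eq] at hmap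
    exact hmap.ge
  have := nak_bot (Module.Finite.fg_top (R := A) (M := M ⧸ N)) htop
  constructor
  intro x y
  have hx : x ∈ (⊤ : Submodule A (M ⧸ N)) := trivial
  have hy : y ∈ (⊤ : Submodule A (M ⧸ N)) := trivial
  rw [this] at hx hy
  simp only [Submodule.mem_bot] at hx hy
  rw [hx, hy]

end NakAux

end Paper
open Paper in
theorem statement_0 (A : Type u) [Ring A] (hA : IsSemiperfectRing A)
    (M : Type u) [AddCommGroup M] [Module A M] [Module.Finite A M]
    (hfac : ∃ (P : Type u) (_ : AddCommGroup P) (_ : Module A P)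
      (_ : Module.Projective A P) (s : M →ₗ[A] P)
      (p : P →ₗ[A] (M ⧸ (jac A • (⊤ : Submodule A M)))),
      p ∘ₗ s = (jac A • (⊤ : Submodule A M)).mkQ) :
    Module.Projective A M := by
  classical
  set K : Submodule A M := jac A • (⊤ : Submodule A M) with hK
  obtain ⟨P, iPa, iPm, hP, s, p, hps⟩ := hfac
  obtain ⟨Q, iQa, iQm, q, hQ⟩ := hA M ‹AddCommGroup M› ‹Module A M› ‹Module.Finite A M›
  obtain ⟨hQproj, hqsurj, hqcover⟩ := hQ
  haveI : Module.Projective A P := hP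
  haveI : Module.Projective A Q := hQproj
  have hJ : jac A = (⊥ : Ideal A).jacobson := rfl
  set J : Ideal A := (⊥ : Ideal A).jacobson with hJdef
    -- Q is finitely generated
  haveI hQfin : Module.Finite A Q := by
    obtain ⟨S, hS⟩ := Module.Finite.fg_top (R := A) (M := M)
    let f : M → Q := Function.surjInv hqsurj
    have hf : ∀ m, q (f m) = m := Function.surjInv_eq hqsurj
    refine ⟨⟨S.image f, ?_⟩⟩
    apply hqcover
    rw [eq_top_iff]
    intro y _
    have hqy : q y ∈ Submodule.span A (S : Set M) := by rw [hS]; trivial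
    have hsub : Submodule.span A (S : Set M) ≤
        Submodule.map q (Submodule.span A ((S.image f : Finset Q) : Set Q)) := by
      rw [Submodule.map_span]
      apply Submodule.span_mono
      intro m hm
      refine ⟨f m, ?_, hf m⟩
      simp only [Finset.coe_image, Set.mem_image, Finset.mem_coe]
      exact ⟨m, hm, rfl⟩
    obtain ⟨n, hn, hnq⟩ := hsub hqy
    have hyk : y - n ∈ LinearMap.ker q := by
      rw [LinearMap.mem_ker, map_sub, hnq, sub_self]
    have hyy : y = n + (y - n) := by abel
    rw [hyy]
    exact Submodule.add_mem_sup hn hyk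
  -- lift p through the projective cover
  have hqt : Function.Surjective (K.mkQ ∘ₗ q) := (Submodule.mkQ_surjective K).comp hqsurj
  obtain ⟨h, hh⟩ := Module.projective_lifting_property (K.mkQ ∘ₗ q) p hqt
  set ψ : M →ₗ[A] Q := h ∘ₗ s with hψ
  have key : ∀ m : M, K.mkQ (q (ψ m)) = K.mkQ m := by
    intro m
    have h1 : p (s m) = K.mkQ m := LinearMap.congr_fun hps m
    have h2 : K.mkQ (q (h (s m))) = p (s m) := LinearMap.congr_fun hh (s m)
    exact h2.trans h1
  -- K is the image of J • ⊤ under q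
  have hKmap : Submodule.map q (J • (⊤ : Submodule A Q)) = K := by
    rw [Submodule.map_smul'', Submodule.map_top, LinearMap.range_eq_top.mpr hqsurj, hK, hJ]
  -- ψ is surjective
  have hrange : LinearMap.range ψ = ⊤ := by
    have hsup : LinearMap.range ψ ⊔ (J • (⊤ : Submodule A Q) ⊔ LinearMap.ker q) = ⊤ := by
      rw [eq_top_iff]
      intro y _
      have hker : q y - q (ψ (q y)) ∈ K := by
        rw [← Submodule.ker_mkQ K, LinearMap.mem_ker, map_sub, key (q y), sub_self]
      rw [← hKmap] at hker
      obtain ⟨z, hz, hzq⟩ := hker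
      have hq0 : y - ψ (q y) - z ∈ LinearMap.ker q := by
        rw [LinearMap.mem_ker, map_sub, map_sub, hzq]
        abel
      have hy : y = ψ (q y) + (z + (y - ψ (q y) - z)) := by abel
      rw [hy]
      exact Submodule.add_mem_sup (LinearMap.mem_range_self ψ (q y))
        (Submodule.add_mem_sup hz hq0)
    have h1 : (LinearMap.range ψ ⊔ J • (⊤ : Submodule A Q)) ⊔ LinearMap.ker q = ⊤ := by
      rw [sup_assoc]; exact hsup
    exact nak_top (hqcover _ h1)
  have hψsurj : Function.Surjective ψ := LinearMap.range_eq_top.mp hrange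
  -- split ψ using projectivity of Q
  obtain ⟨r, hr⟩ := Module.projective_lifting_property ψ LinearMap.id hψsurj
  have hrr : ∀ y : Q, ψ (r y) = y := fun y => LinearMap.congr_fun hr y
  -- the kernel of ψ
  set e : M →ₗ[A] M := LinearMap.id - r ∘ₗ ψ with he
  have hee : ∀ x : M, e x = x - r (ψ x) := fun x => rfl
  have hre : LinearMap.range e ≤ LinearMap.ker ψ := by
    rintro _ ⟨y, rfl⟩
    rw [LinearMap.mem_ker, hee, map_sub, hrr, sub_self]
  have hfix : ∀ x ∈ LinearMap.ker ψ, e x = x := by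
    intro x hx
    rw [LinearMap.mem_ker] at hx
    rw [hee, hx, map_zero, sub_zero]
  have hker_range : LinearMap.ker ψ = LinearMap.range e := by
    refine le_antisymm (fun x hx => ⟨x, hfix x hx⟩) hre
  have hkerK : LinearMap.ker ψ ≤ K := by
    intro x hx
    have hx0 : ψ x = 0 := hx
    have := key x
    rw [hx0, map_zero, map_zero] at this
    rw [← Submodule.ker_mkQ K, LinearMap.mem_ker]
    exact this.symm
  have hsmall : LinearMap.ker ψ ≤ J • LinearMap.ker ψ := by
    intro x hx
    have hxK : x ∈ Submodule.map e K := ⟨x, hkerK hx, hfix x hx⟩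
    have hmap : Submodule.map e K ≤ J • LinearMap.ker ψ := by
      rw [hK, hJ, Submodule.map_smul'', Submodule.map_top]
      exact smul_mono_right J hre
    exact hmap hxK
  have hkerfg : (LinearMap.ker ψ).FG := by
    rw [hker_range, LinearMap.range_eq_map]
    exact Submodule.FG.map e (Module.Finite.fg_top (R := A) (M := M))
  have hker_bot : LinearMap.ker ψ = ⊥ := nak_bot hkerfg hsmall
  have hψinj : Function.Injective ψ := LinearMap.ker_eq_bot.mp hker_bot
  have hsplit : r ∘ₗ ψ = LinearMap.id := by
    ext x
    apply hψinj
    simp only [LinearMap.comp_apply, LinearMap.id_apply, hrr]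
  exact Module.Projective.of_split ψ r hsplit
end
end

section
/- Let A be a semiperfect noetherian ring with Jacobson radical J, M a finitely generated A-module, and d ≥ 0 an integer. If Ext_A^{d+1}(M, J) = 0, then the projective dimension of M is at most d. -/
open CategoryTheory Limits Opposite

universe u

noncomputable section

namespace JansAux
open Function

variable {A : Type u} [Ring A]

/-- jacobson radical elements act into any coatom submodule. -/
lemma jac_smul_mem_coatom {P : Type u} [AddCommGroup P] [Module A P] {L : Submodule A P}
    (hL : IsCoatom L) {a : A} (ha : a ∈ Ideal.jacobson (⊥ : Ideal A)) (x : P) : a • x ∈ L := by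
  by_cases hx : x ∈ L
  · exact L.smul_mem a hx
  · set m : Ideal A := Submodule.comap (LinearMap.toSpanSingleton A P x) L with hm
    have hmem : ∀ b : A, b ∈ m ↔ b • x ∈ L := fun b => Iff.rfl
    have hmax : m.IsMaximal := by
      rw [Ideal.isMaximal_def]
      constructor
      · intro h1
        exact hx (by simpa using (hmem 1).1 (h1 ▸ Submodule.mem_top))
      · intro I hI
        obtain ⟨b, hbI, hbm⟩ := SetLike.exists_of_lt hI
        have hbx : b • x ∉ L := fun h => hbm ((hmem b).2 h)
        have hsup : L ⊔ Submodule.span A {b • x} = ⊤ := by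
          refine hL.2 _ (lt_of_le_of_ne le_sup_left ?_)
          intro hEq
          exact hbx (hEq ▸ Submodule.mem_sup_right (Submodule.mem_span_singleton_self _))
        have hxmem : x ∈ L ⊔ Submodule.span A {b • x} := hsup ▸ Submodule.mem_top
        obtain ⟨y, hy, z, hz, hxyz⟩ := Submodule.mem_sup.1 hxmem
        obtain ⟨c, rfl⟩ := Submodule.mem_span_singleton.1 hz
        have : (1 - c * b) • x = y := by
          rw [sub_smul, one_smul, mul_smul]
          nth_rewrite 1 [← hxyz]
          abel
        have h1cb : (1 - c * b) ∈ m := (hmem _).2 (this ▸ hy)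
        have : (1 : A) ∈ I := by
          have hcb : c * b ∈ I := I.smul_mem c hbI
          have := I.add_mem (hI.le h1cb) hcb
          simpa using this
        exact (Ideal.eq_top_iff_one I).2 this
    exact (hmem a).1 (sInf_le (show m ∈ {J : Ideal A | ⊥ ≤ J ∧ J.IsMaximal} from ⟨bot_le, hmax⟩) ha)

/-- Noncommutative Nakayama, sup form. -/
lemma nakayama_sup {P : Type u} [AddCommGroup P] [Module A P] [IsNoetherian A P]
    {N : Submodule A P}
    (hN : N ⊔ (Ideal.jacobson (⊥ : Ideal A)) • (⊤ : Submodule A P) = ⊤) : N = ⊤ := by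
  by_contra hne
  haveI : IsCoatomic (Submodule A P) :=
    isCoatomic_of_orderTop_gt_wellFounded wellFounded_gt
  obtain (h | ⟨L, hL, hNL⟩) := (IsCoatomic.eq_top_or_exists_le_coatom N)
  · exact hne h
  · have hJL : (Ideal.jacobson (⊥ : Ideal A)) • (⊤ : Submodule A P) ≤ L :=
      Submodule.smul_le.2 fun a ha x _ => jac_smul_mem_coatom hL ha x
    exact hL.1 (top_le_iff.1 (hN ▸ sup_le hNL hJL))


/-- A projective cover of a finitely generated module is finitely generated. -/
lemma cover_finite {P N : Type u} [AddCommGroup P] [Module A P] [AddCommGroup N] [Module A N]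
    [Module.Finite A N] (p : P →ₗ[A] N) (hsur : Surjective p)
    (hsmall : ∀ N' : Submodule A P, N' ⊔ LinearMap.ker p = ⊤ → N' = ⊤) :
    Module.Finite A P := by
  classical
  obtain ⟨S, hS⟩ := (Module.finite_def.1 ‹Module.Finite A N›)
  set T : Finset P := S.image (fun s => Classical.choose (hsur s)) with hT
  have hpT : ∀ s ∈ S, ∃ t ∈ T, p t = s := fun s hs =>
    ⟨_, Finset.mem_image.2 ⟨s, hs, rfl⟩, Classical.choose_spec (hsur s)⟩
  have hmapT : Submodule.map p (Submodule.span A (T : Set P)) = ⊤ := by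
    rw [Submodule.map_span, ← top_le_iff, ← hS]
    refine Submodule.span_le.2 fun s hs => ?_
    obtain ⟨t, ht, hts⟩ := hpT s hs
    exact Submodule.subset_span ⟨t, ht, hts⟩
  have hsup : Submodule.span A (T : Set P) ⊔ LinearMap.ker p = ⊤ := by
    rw [eq_top_iff]
    intro x _
    have : p x ∈ Submodule.map p (Submodule.span A (T : Set P)) := hmapT ▸ Submodule.mem_top
    obtain ⟨y, hy, hyx⟩ := this
    refine Submodule.mem_sup.2 ⟨y, hy, x - y, ?_, by abel⟩
    simp [LinearMap.mem_ker, map_sub, hyx]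
  have := hsmall _ hsup
  exact ⟨⟨T, this⟩⟩

/-- Jans' key lemma: a small submodule `K` of a finitely generated projective module `P`
such that every map `K → J` extends to `P` must be zero. -/
lemma key_lemma {P : Type u} [AddCommGroup P] [Module A P] [Module.Projective A P]
    [Module.Finite A P] [IsNoetherian A P]
    (K : Submodule A P)
    (hsmall : ∀ N : Submodule A P, N ⊔ K = ⊤ → N = ⊤)
    (hext : ∀ φ : K →ₗ[A] ↥(Ideal.jacobson (⊥ : Ideal A)),
      ∃ g : P →ₗ[A] ↥(Ideal.jacobson (⊥ : Ideal A)), ∀ k : K, g (k : P) = φ k) :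
    K = ⊥ := by
  classical
  set J : Ideal A := Ideal.jacobson (⊥ : Ideal A) with hJ
  obtain ⟨n, π, hπ⟩ := Module.Finite.exists_fin' A P
  obtain ⟨s, hs⟩ := Module.projective_lifting_property π LinearMap.id hπ
  -- Step 1 : K maps into J in every coordinate
  have step1 : ∀ k ∈ K, ∀ j : Fin n, s k j ∈ J := by
    intro k hk j
    by_contra hnot
    have hnot' : ¬ ∀ m ∈ {I : Ideal A | ⊥ ≤ I ∧ I.IsMaximal}, s k j ∈ m :=
      fun hall => hnot (Submodule.mem_sInf.2 hall)
    push_neg at hnot'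
    obtain ⟨m, ⟨-, hmax⟩, hkm⟩ := hnot'
    set f : P →ₗ[A] A := (LinearMap.proj j) ∘ₗ s with hf
    have hfk : f k ∉ m := hkm
    set L : Submodule A P := Submodule.comap f m with hLdef
    have hLK : L ⊔ K = ⊤ := by
      rw [eq_top_iff]
      intro x _
      have hmsup : m ⊔ Submodule.span A {f k} = ⊤ := by
        refine ((Ideal.isMaximal_def.1 hmax).2 _ (lt_of_le_of_ne le_sup_left ?_))
        intro hEq
        exact hfk (hEq ▸ Submodule.mem_sup_right (Submodule.mem_span_singleton_self _))
      have hfx : f x ∈ m ⊔ Submodule.span A {f k} := hmsup ▸ Submodule.mem_top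
      obtain ⟨u, hu, z, hz, huz⟩ := Submodule.mem_sup.1 hfx
      obtain ⟨c, rfl⟩ := Submodule.mem_span_singleton.1 hz
      refine Submodule.mem_sup.2 ⟨x - c • k, ?_, c • k, K.smul_mem c hk, by abel⟩
      have : f (x - c • k) = u := by
        rw [map_sub, map_smul, ← huz]
        simp [smul_eq_mul]
      exact (Submodule.mem_comap).2 (this ▸ hu)
    have := hsmall L hLK
    exact hfk ((Submodule.mem_comap).1 (this ▸ Submodule.mem_top : k ∈ L))
  -- Step 2 : extend the coordinates of s on K to maps P → J
  have step2 : ∀ j : Fin n, ∃ g : P →ₗ[A] ↥J, ∀ k : K, (g (k : P) : A) = s (k : P) j := by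
    intro j
    set φ : K →ₗ[A] ↥J := LinearMap.codRestrict J (((LinearMap.proj j) ∘ₗ s) ∘ₗ K.subtype) (fun k => by simpa using step1 k k.2 j) with hφ
    obtain ⟨g, hg⟩ := hext φ
    exact ⟨g, fun k => by rw [hg k]; rfl⟩
  choose g hg using step2
  -- the corrected map t with values in J
  set t : P →ₗ[A] (Fin n → A) := LinearMap.pi (fun j => (J.subtype) ∘ₗ g j) with ht
  have htk : ∀ k : K, t (k : P) = s (k : P) := by
    intro k; funext j
    simpa [ht] using hg j k
  have htJ : ∀ (x : P) (j : Fin n), t x j ∈ J := fun x j => (g j x).2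
  set hmap : P →ₗ[A] P := π ∘ₗ (s - t) with hh
  have hker : ∀ k ∈ K, hmap k = 0 := by
    intro k hk
    have h0 : s k - t k = 0 := by
      have := htk ⟨k, hk⟩
      simp only [Submodule.coe_mk] at this
      rw [this]; simp
    show π ((s - t) k) = 0
    rw [LinearMap.sub_apply, h0, map_zero]
  have hsur : LinearMap.range hmap ⊔ J • (⊤ : Submodule A P) = ⊤ := by
    rw [eq_top_iff]
    intro x _
    have hx : x = hmap x + π (t x) := by
      have h1 : π (s x) = x := by simpa using congrArg (fun q => q x) hs
      have h2 : hmap x = π (s x) - π (t x) := by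
        show π ((s - t) x) = _
        rw [LinearMap.sub_apply, map_sub]
      rw [h2, h1]; abel
    have hπt : π (t x) ∈ J • (⊤ : Submodule A P) := by
      have : t x = ∑ j : Fin n, (t x j) • (Pi.single j 1 : Fin n → A) := by
        funext i
        simp [Finset.sum_apply, Pi.single_apply, smul_eq_mul]
      rw [this, map_sum]
      refine Submodule.sum_mem _ fun j _ => ?_
      rw [map_smul]
      exact Submodule.smul_mem_smul (htJ x j) Submodule.mem_top
    rw [hx]
    exact Submodule.add_mem _ (Submodule.mem_sup_left (LinearMap.mem_range_self _ x))
      (Submodule.mem_sup_right hπt)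
  have hrange : LinearMap.range hmap = ⊤ := nakayama_sup hsur
  have hinj : Function.Injective hmap :=
    IsNoetherian.injective_of_surjective_endomorphism hmap
      (LinearMap.range_eq_top.1 hrange)
  rw [eq_bot_iff]
  intro k hk
  have : hmap k = hmap 0 := by rw [hker k hk, map_zero]
  simpa using hinj this


section Resolution
open Paper

variable (A) in
lemma cover_nonempty [IsNoetherianRing A] (hA : IsSemiperfectRing A) (N : ModuleCat.{u} A)
    (hN : Module.Finite A N) :
    Nonempty (Σ' (P : ModuleCat.{u} A) (p : P ⟶ N),
      IsProjectiveCoverHom A p ∧ Module.Finite A P) := by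
  obtain ⟨P, iP, mP, p, hp⟩ := hA N inferInstance inferInstance hN
  refine ⟨⟨ModuleCat.of A P, ModuleCat.ofHom p, ⟨?_, hp.2.1, hp.2.2⟩, ?_⟩⟩
  · exact (IsProjective.iff_projective _).1 hp.1
  · exact cover_finite p hp.2.1 hp.2.2

variable [IsNoetherianRing A] (hA : IsSemiperfectRing A)

/-- choice of projective cover -/
def coverOf (N : ModuleCat.{u} A) (hN : Module.Finite A N) :
    Σ' (P : ModuleCat.{u} A) (p : P ⟶ N), IsProjectiveCoverHom A p ∧ Module.Finite A P :=
  Classical.choice (cover_nonempty A hA N hN)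

lemma ker_finite {P N : ModuleCat.{u} A} (p : P ⟶ N) (hP : Module.Finite A P) :
    Module.Finite A ↥(LinearMap.ker p.hom) := by
  haveI : IsNoetherian A P := isNoetherian_of_isNoetherianRing_of_finite A P
  exact Module.Finite.iff_fg.2 (IsNoetherian.noetherian _)

variable (M₀ : ModuleCat.{u} A) (h₀ : Module.Finite A M₀)

/-- the tower of syzygies -/
def syz : ℕ → Σ' (N : ModuleCat.{u} A), Module.Finite A N
  | 0 => ⟨M₀, h₀⟩
  | n+1 =>
    let t := syz n
    let c := coverOf hA t.1 t.2
    ⟨ModuleCat.of A ↥(LinearMap.ker c.2.1.hom), ker_finite c.2.1 c.2.2.2⟩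

/-- the `n`-th syzygy module -/
def Kmod (n : ℕ) : ModuleCat.{u} A := (syz hA M₀ h₀ n).1

/-- the `n`-th projective in the minimal resolution -/
def Pmod (n : ℕ) : ModuleCat.{u} A := (coverOf hA (Kmod hA M₀ h₀ n) (syz hA M₀ h₀ n).2).1

/-- the `n`-th projective cover map -/
def pcov (n : ℕ) : Pmod hA M₀ h₀ n ⟶ Kmod hA M₀ h₀ n :=
  (coverOf hA (Kmod hA M₀ h₀ n) (syz hA M₀ h₀ n).2).2.1

lemma pcov_is_cover (n : ℕ) : IsProjectiveCoverHom A (pcov hA M₀ h₀ n) :=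
  (coverOf hA (Kmod hA M₀ h₀ n) (syz hA M₀ h₀ n).2).2.2.1

lemma Pmod_finite (n : ℕ) : Module.Finite A (Pmod hA M₀ h₀ n) :=
  (coverOf hA (Kmod hA M₀ h₀ n) (syz hA M₀ h₀ n).2).2.2.2

lemma Kmod_succ (n : ℕ) :
    Kmod hA M₀ h₀ (n+1) = ModuleCat.of A
      ↥(LinearMap.ker ((pcov hA M₀ h₀ n : Pmod hA M₀ h₀ n ⟶ Kmod hA M₀ h₀ n).hom :
        Pmod hA M₀ h₀ n →ₗ[A] Kmod hA M₀ h₀ n)) := rfl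

/-- the inclusion of the (n+1)-st syzygy -/
def incl (n : ℕ) : Kmod hA M₀ h₀ (n+1) ⟶ Pmod hA M₀ h₀ n :=
  ModuleCat.ofHom (LinearMap.ker ((pcov hA M₀ h₀ n).hom :
    Pmod hA M₀ h₀ n →ₗ[A] Kmod hA M₀ h₀ n)).subtype


lemma incl_pcov (n : ℕ) : incl hA M₀ h₀ n ≫ pcov hA M₀ h₀ n = 0 := by
  ext x
  exact x.2

lemma pcov_surjective (n : ℕ) :
    Function.Surjective ((pcov hA M₀ h₀ n).hom : Pmod hA M₀ h₀ n →ₗ[A] Kmod hA M₀ h₀ n) :=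
  (pcov_is_cover hA M₀ h₀ n).2.1

/-- the differentials of the minimal resolution -/
def dres (n : ℕ) : Pmod hA M₀ h₀ (n+1) ⟶ Pmod hA M₀ h₀ n :=
  pcov hA M₀ h₀ (n+1) ≫ incl hA M₀ h₀ n

lemma dres_dres (n : ℕ) : dres hA M₀ h₀ (n+1) ≫ dres hA M₀ h₀ n = 0 := by
  show (pcov hA M₀ h₀ (n+2) ≫ incl hA M₀ h₀ (n+1)) ≫ (pcov hA M₀ h₀ (n+1) ≫ incl hA M₀ h₀ n) = 0
  rw [Category.assoc, ← Category.assoc (incl hA M₀ h₀ (n+1)), incl_pcov, zero_comp, comp_zero]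

/-- the minimal projective resolution complex -/
def resComplex : ChainComplex (ModuleCat.{u} A) ℕ :=
  ChainComplex.of (Pmod hA M₀ h₀) (dres hA M₀ h₀) (dres_dres hA M₀ h₀)

lemma resComplex_exactAt_succ (n : ℕ) : (resComplex hA M₀ h₀).ExactAt (n+1) := by
  rw [HomologicalComplex.exactAt_iff' _ (n + 1 + 1) (n + 1) n (by simp) (by simp)]
  rw [ShortComplex.moduleCat_exact_iff]
  intro (x : Pmod hA M₀ h₀ (n+1)) hx
  have hx' : (pcov hA M₀ h₀ (n+1) ≫ incl hA M₀ h₀ n) x = 0 := by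
    have hd : (resComplex hA M₀ h₀).d (n+1) n = dres hA M₀ h₀ n := ChainComplex.of_d _ _ n
    rw [show (pcov hA M₀ h₀ (n+1) ≫ incl hA M₀ h₀ n) = dres hA M₀ h₀ n from rfl, ← hd]
    exact hx
  have hker : (pcov hA M₀ h₀ (n+1)) x = 0 := by
    have := hx'
    exact Subtype.ext this
  obtain ⟨y, hy⟩ := pcov_surjective hA M₀ h₀ (n+2) ⟨x, LinearMap.mem_ker.2 hker⟩
  refine ⟨y, ?_⟩
  show ((resComplex hA M₀ h₀).d (n+1+1) (n+1)) y = x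
  rw [show (resComplex hA M₀ h₀).d (n+1+1) (n+1) = dres hA M₀ h₀ (n+1) from ChainComplex.of_d _ _ (n+1)]
  show (incl hA M₀ h₀ (n+1)) ((pcov hA M₀ h₀ (n+2)) y) = x
  rw [hy]
  rfl

/-- the augmented resolution as a `ProjectiveResolution` -/
def resolution : ProjectiveResolution M₀ where
  complex := resComplex hA M₀ h₀
  projective n := (pcov_is_cover hA M₀ h₀ n).1
  π := (ChainComplex.toSingle₀Equiv _ _).symm ⟨pcov hA M₀ h₀ 0, by
    rw [show (resComplex hA M₀ h₀).d 1 0 = dres hA M₀ h₀ 0 from ChainComplex.of_d (Pmod hA M₀ h₀) (dres hA M₀ h₀) 0]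
    show pcov hA M₀ h₀ 1 ≫ (incl hA M₀ h₀ 0 ≫ pcov hA M₀ h₀ 0) = 0
    rw [incl_pcov, comp_zero]⟩
  quasiIso := ⟨fun n => by
    cases n with
    | zero =>
      rw [ChainComplex.quasiIsoAt₀_iff, ShortComplex.quasiIso_iff_of_zeros']
      · constructor
        · rw [ShortComplex.moduleCat_exact_iff]
          intro (x : Pmod hA M₀ h₀ 0) hx
          have hx0 : (pcov hA M₀ h₀ 0) x = 0 := by
            exact hx
          obtain ⟨y, hy⟩ := pcov_surjective hA M₀ h₀ 1 ⟨x, LinearMap.mem_ker.2 hx0⟩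
          refine ⟨y, ?_⟩
          show ((resComplex hA M₀ h₀).d 1 0) y = x
          rw [show (resComplex hA M₀ h₀).d 1 0 = dres hA M₀ h₀ 0 from ChainComplex.of_d (Pmod hA M₀ h₀) (dres hA M₀ h₀) 0]
          show (incl hA M₀ h₀ 0) ((pcov hA M₀ h₀ 1) y) = x
          rw [hy]; rfl
        · have : Epi (pcov hA M₀ h₀ 0) :=
            (ModuleCat.epi_iff_surjective _).2 (pcov_surjective hA M₀ h₀ 0)
          exact this
      all_goals rfl
    | succ n =>
      rw [quasiIsoAt_iff_exactAt']
      · exact resComplex_exactAt_succ hA M₀ h₀ n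
      · apply ChainComplex.exactAt_succ_single_obj⟩


lemma subsingleton_of_iso {X Y : ModuleCat.{u} ℤ} (e : X ≅ Y) (hX : Subsingleton X) :
    Subsingleton Y := by
  constructor
  intro y₁ y₂
  have h1 : ∀ y : Y, e.hom (e.inv y) = y := fun y => by
    change (e.inv ≫ e.hom) y = y
    rw [e.inv_hom_id]
    rfl
  rw [← h1 y₁, ← h1 y₂, Subsingleton.elim (e.inv y₁) (e.inv y₂)]

/-- The extension property derived from Ext-vanishing. -/
lemma extension_property (d : ℕ)
    (h : extVanish A M₀ (ModuleCat.of A ↥(jac A)) (d + 1)) :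
    ∀ φ : ↥(LinearMap.ker ((pcov hA M₀ h₀ d).hom :
        Pmod hA M₀ h₀ d →ₗ[A] Kmod hA M₀ h₀ d)) →ₗ[A] ↥(jac A),
      ∃ g : Pmod hA M₀ h₀ d →ₗ[A] ↥(jac A),
        ∀ k : ↥(LinearMap.ker ((pcov hA M₀ h₀ d).hom :
          Pmod hA M₀ h₀ d →ₗ[A] Kmod hA M₀ h₀ d)), g (k : Pmod hA M₀ h₀ d) = φ k := by
  intro φ
  let J : ModuleCat.{u} A := ModuleCat.of A ↥(jac A)
  let C' : CochainComplex (ModuleCat ℤ) ℕ :=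
    (resComplex hA M₀ h₀).linearYonedaObj ℤ J
  have hD : ∀ (i j : ℕ) (f : (resComplex hA M₀ h₀).X i ⟶ J),
      (C'.d i j) f = (resComplex hA M₀ h₀).d j i ≫ f := by
    intro i j f
    simp [C', ChainComplex.linearYonedaObj_d]; rfl
  have hss : Subsingleton (C'.homology (d+1)) :=
    subsingleton_of_iso ((resolution hA M₀ h₀).isoExt (d+1) J) h
  have hzero : IsZero (C'.homology (d+1)) := ModuleCat.isZero_of_subsingleton _
  have hexact : C'.ExactAt (d+1) :=
    (HomologicalComplex.exactAt_iff_isZero_homology _ _).2 hzero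
  rw [HomologicalComplex.exactAt_iff' _ d (d+1) (d+2) (by simp) (by simp)] at hexact
  rw [ShortComplex.moduleCat_exact_iff] at hexact
  -- the cocycle
  let φ' : Kmod hA M₀ h₀ (d+1) ⟶ J := ModuleCat.ofHom φ
  let x₂ : Pmod hA M₀ h₀ (d+1) ⟶ J := pcov hA M₀ h₀ (d+1) ≫ φ'
  have hcocycle : (C'.d (d+1) (d+2)) x₂ = 0 := by
    rw [hD (d+1) (d+2) x₂]
    rw [show (resComplex hA M₀ h₀).d (d+1+1) (d+1) = dres hA M₀ h₀ (d+1) from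
      ChainComplex.of_d _ _ (d+1)]
    show (pcov hA M₀ h₀ (d+2) ≫ incl hA M₀ h₀ (d+1)) ≫ pcov hA M₀ h₀ (d+1) ≫ φ' = 0
    rw [Category.assoc, ← Category.assoc (incl hA M₀ h₀ (d+1)), incl_pcov, zero_comp,
      comp_zero]
  obtain ⟨(g : (resComplex hA M₀ h₀).X d ⟶ J), hg⟩ := hexact x₂ hcocycle
  refine ⟨(g : (resComplex hA M₀ h₀).X d ⟶ J).hom, fun k => ?_⟩
  have hgf : (resComplex hA M₀ h₀).d (d+1) d ≫ g = x₂ := by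
    rw [← hD d (d+1) g]
    exact hg
  rw [show (resComplex hA M₀ h₀).d (d+1) d = dres hA M₀ h₀ d from
    ChainComplex.of_d _ _ d] at hgf
  have hres : incl hA M₀ h₀ d ≫ (g : (resComplex hA M₀ h₀).X d ⟶ J) = φ' := by
    have hepi : Epi (pcov hA M₀ h₀ (d+1)) :=
      (ModuleCat.epi_iff_surjective _).2 (pcov_surjective hA M₀ h₀ (d+1))
    have : pcov hA M₀ h₀ (d+1) ≫ incl hA M₀ h₀ d ≫ (g : (resComplex hA M₀ h₀).X d ⟶ J)
        = pcov hA M₀ h₀ (d+1) ≫ φ' := by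
      refine (Category.assoc _ _ _).symm.trans ?_
      exact hgf
    exact (cancel_epi (pcov hA M₀ h₀ (d+1))).1 this
  have := congrArg (fun q => q.hom k) hres
  exact this

/-- modules covered by projective covers of subsingletons are subsingletons -/
lemma cover_subsingleton {P N : ModuleCat.{u} A} (p : P ⟶ N)
    (hp : IsProjectiveCoverHom A p) (hN : Subsingleton N) : Subsingleton P := by
  have hker : LinearMap.ker p.hom = ⊤ := by
    rw [eq_top_iff]
    intro x _
    simp only [LinearMap.mem_ker]
    exact Subsingleton.elim _ _
  have hbot : (⊥ : Submodule A P) = ⊤ := hp.2.2 ⊥ (by rw [hker]; simp)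
  constructor
  intro x y
  have hx : x ∈ (⊥ : Submodule A P) := hbot ▸ Submodule.mem_top
  have hy : y ∈ (⊥ : Submodule A P) := hbot ▸ Submodule.mem_top
  rw [(Submodule.mem_bot A).1 hx, (Submodule.mem_bot A).1 hy]

/-- Once a syzygy vanishes, all the later projectives are trivial. -/
lemma Pmod_subsingleton_of (d : ℕ)
    (hK : Subsingleton (Kmod hA M₀ h₀ (d+1))) :
    ∀ i, d + 1 ≤ i → Subsingleton (Pmod hA M₀ h₀ i) := by
  have step : ∀ i, Subsingleton (Kmod hA M₀ h₀ i) → Subsingleton (Pmod hA M₀ h₀ i) :=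
    fun i hi => cover_subsingleton (pcov hA M₀ h₀ i) (pcov_is_cover hA M₀ h₀ i) hi
  intro i hi
  induction i, hi using Nat.le_induction with
  | base => exact step _ hK
  | succ n hn ih =>
    refine step _ ?_
    haveI : Subsingleton (Pmod hA M₀ h₀ n) := ih
    rw [Kmod_succ]
    exact ⟨fun a b => Subtype.ext (Subsingleton.elim (α := ↥(Pmod hA M₀ h₀ n)) _ _)⟩


lemma subsingleton_of_isZero {X : ModuleCat.{u} ℤ} (h : IsZero X) : Subsingleton X := by
  constructor
  intro a b
  have h0 : (𝟙 X : X ⟶ X) = 0 := h.eq_of_src _ _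
  have ha : a = (0 : X ⟶ X) a := by rw [← h0]; rfl
  have hb : b = (0 : X ⟶ X) b := by rw [← h0]; rfl
  rw [ha, hb]
  rfl

end Resolution
end JansAux

open Paper in
theorem statement_2 (A : Type u) [Ring A] [IsNoetherianRing A]
    (hA : IsSemiperfectRing A)
    (M : Type u) [AddCommGroup M] [Module A M] [Module.Finite A M] (d : ℕ)
    (h : extVanish A (ModuleCat.of A M) (ModuleCat.of A ↥(jac A)) (d + 1)) :
    projDim A (ModuleCat.of A M) ≤ (d : ℕ∞) := by
  classical
  let M₀ : ModuleCat.{u} A := ModuleCat.of A M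
  have h₀ : Module.Finite A M₀ := ‹Module.Finite A M›
  -- instances on the d-th projective
  haveI hfin : Module.Finite A (JansAux.Pmod hA M₀ h₀ d) := JansAux.Pmod_finite hA M₀ h₀ d
  haveI : IsNoetherian A (JansAux.Pmod hA M₀ h₀ d) :=
    isNoetherian_of_isNoetherianRing_of_finite A _
  haveI : Module.Projective A (JansAux.Pmod hA M₀ h₀ d) :=
    (IsProjective.iff_projective _).2 (JansAux.pcov_is_cover hA M₀ h₀ d).1
  -- the (d+1)-st syzygy vanishes
  have hK : LinearMap.ker ((JansAux.pcov hA M₀ h₀ d).hom :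
      JansAux.Pmod hA M₀ h₀ d →ₗ[A] JansAux.Kmod hA M₀ h₀ d) = ⊥ :=
    JansAux.key_lemma _ (JansAux.pcov_is_cover hA M₀ h₀ d).2.2
      (JansAux.extension_property hA M₀ h₀ d h)
  have hsub' : Subsingleton ↥(LinearMap.ker ((JansAux.pcov hA M₀ h₀ d).hom :
      JansAux.Pmod hA M₀ h₀ d →ₗ[A] JansAux.Kmod hA M₀ h₀ d)) := by
    rw [hK]
    exact ⟨fun a b => Subtype.ext (by
      rw [(Submodule.mem_bot A).1 a.2, (Submodule.mem_bot A).1 b.2])⟩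
  have hsub : Subsingleton (JansAux.Kmod hA M₀ h₀ (d+1)) := hsub'
  have hPsub := JansAux.Pmod_subsingleton_of hA M₀ h₀ d hsub
  -- projective dimension at most d
  have hle : projDimLE A M₀ d := by
    intro N i hi
    have hi' : d + 1 ≤ i := hi
    haveI hXi : Subsingleton ((JansAux.resComplex hA M₀ h₀).X i ⟶ N) := by
      haveI := hPsub i hi'
      exact ⟨fun f g => ModuleCat.hom_ext (LinearMap.ext fun x => by
        rw [show x = 0 from Subsingleton.elim (α := ↥(JansAux.Pmod hA M₀ h₀ i)) x 0]
        rw [map_zero, map_zero])⟩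
    have hzero : IsZero (((JansAux.resComplex hA M₀ h₀).linearYonedaObj ℤ N).X i) := by
      haveI : Subsingleton (((JansAux.resComplex hA M₀ h₀).linearYonedaObj ℤ N).X i) := hXi
      exact ModuleCat.isZero_of_subsingleton _
    have hexact : ((JansAux.resComplex hA M₀ h₀).linearYonedaObj ℤ N).ExactAt i := by
      rw [HomologicalComplex.exactAt_iff]
      exact ShortComplex.exact_of_isZero_X₂ _ hzero
    have hhom : IsZero (((JansAux.resComplex hA M₀ h₀).linearYonedaObj ℤ N).homology i) :=
      (HomologicalComplex.exactAt_iff_isZero_homology _ _).1 hexact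
    exact JansAux.subsingleton_of_iso ((JansAux.resolution hA M₀ h₀).isoExt i N).symm
      (JansAux.subsingleton_of_isZero hhom)
  exact sInf_le ⟨d, rfl, hle⟩
end
end

section
/- Let A be a semiperfect noetherian ring with Jacobson radical J and M a finitely generated A-module. Then proj dim_A M equals sup{0} ∪ {i : Ext_A^i(M, J) ≠ 0}; in particular, proj dim_A M is finite if and only if Ext_A^i(M, J) = 0 for all i ≫ 0. -/
open CategoryTheory Limits Opposite

universe u

noncomputable section

namespace Aux4
open Paper

variable {A : Type u} [Ring A]

/-- A small (superfluous) submodule maps into the Jacobson radical under any map to `A`. -/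
lemma small_image_le_jac {P : Type u} [AddCommGroup P] [Module A P]
    {K : Submodule A P}
    (hK : ∀ N : Submodule A P, N ⊔ K = ⊤ → N = ⊤)
    (f : P →ₗ[A] A) {k : P} (hk : k ∈ K) : f k ∈ (⊥ : Ideal A).jacobson := by
  rw [Ideal.jacobson]
  refine Submodule.mem_sInf.2 fun m hm => ?_
  obtain ⟨-, hmax⟩ := hm
  have hsimple : IsSimpleModule A (A ⧸ m) := isSimpleModule_iff_isCoatom.2 (Ideal.isMaximal_def.1 hmax)
  set g : P →ₗ[A] A ⧸ m := m.mkQ.comp f with hg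
  by_cases hrange : LinearMap.range g = ⊥
  · have : g k = 0 := by
      have := LinearMap.mem_range_self g k
      rw [hrange] at this
      simpa using this
    simpa [hg, Submodule.Quotient.mk_eq_zero] using this
  · have hsurj : Function.Surjective g := by
      rw [← LinearMap.range_eq_top]
      rcases eq_bot_or_eq_top (LinearMap.range g) with h | h
      · exact absurd h hrange
      · exact h
    have hco : IsCoatom (LinearMap.ker g) := LinearMap.isCoatom_ker_of_surjective hsurj
    have hKker : K ≤ LinearMap.ker g := by
      by_contra hnot
      have hlt : LinearMap.ker g < LinearMap.ker g ⊔ K := by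
        refine lt_of_le_of_ne le_sup_left fun hEq => hnot ?_
        exact le_trans le_sup_right hEq.ge
      have := hK _ (hco.2 _ hlt)
      exact hco.1 this
    have : g k = 0 := hKker hk
    simpa [hg, Submodule.Quotient.mk_eq_zero] using this

set_option maxHeartbeats 1600000 in
/-- Noncommutative Nakayama: on a f.g. module, `N ⊔ J•⊤ = ⊤` implies `N = ⊤`. -/
lemma sup_jac_smul_top_eq_top {P : Type u} [AddCommGroup P] [Module A P]
    [Module.Finite A P] {N : Submodule A P}
    (h : N ⊔ ((⊥ : Ideal A).jacobson • (⊤ : Submodule A P)) = ⊤) : N = ⊤ := by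
  by_contra hN
  have hcoatomic : IsCoatomic (Submodule A P) :=
    CompleteLattice.coatomic_of_top_compact
      ((Submodule.fg_iff_compact _).1 (Module.finite_def.1 ‹Module.Finite A P›))
  rcases (hcoatomic.eq_top_or_exists_le_coatom N).resolve_left hN with ⟨m, hm, hNm⟩
  have hJm : (⊥ : Ideal A).jacobson • (⊤ : Submodule A P) ≤ m := by
    refine Submodule.smul_le.2 fun j hj x _ => ?_
    by_contra hjx
    have hlt : m < m ⊔ Submodule.span A {j • x} := by
      refine lt_of_le_of_ne le_sup_left fun hEq => hjx ?_
      exact hEq ▸ Submodule.mem_sup_right (Submodule.mem_span_singleton_self _)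
    have htop : m ⊔ Submodule.span A {j • x} = ⊤ := hm.2 _ hlt
    -- x ∈ ⊤, write x = y + a • (j • x)
    have hx : x ∈ m ⊔ Submodule.span A {j • x} := htop ▸ Submodule.mem_top
    rcases Submodule.mem_sup.1 hx with ⟨y, hy, z, hz, hyz⟩
    rcases Submodule.mem_span_singleton.1 hz with ⟨a, rfl⟩
    have haj : a * j ∈ (⊥ : Ideal A).jacobson := Ideal.mul_mem_left _ a hj
    -- left inverse of 1 - a * j
    have hunit : ∃ u : A, u * (1 - a * j) = 1 := by
      by_contra hno
      push_neg at hno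
      have hone : (1 : A) ∉ Ideal.span {1 - a * j} := by
        intro h1
        rcases Submodule.mem_span_singleton.1 h1 with ⟨u, hu⟩
        exact hno u (by simpa [smul_eq_mul] using hu)
      have hne : Ideal.span {1 - a * j} ≠ ⊤ := fun h => hone (h ▸ Submodule.mem_top)
      rcases Ideal.exists_le_maximal _ hne with ⟨mI, hmI, hle⟩
      have h1 : (1 - a * j) ∈ mI := hle (Ideal.subset_span rfl)
      have h2 : a * j ∈ mI := by
        refine sInf_le (α := Ideal A) ?_ haj
        exact ⟨bot_le, hmI⟩
      have : (1 : A) ∈ mI := by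
        have := mI.add_mem h1 h2
        simpa using this
      exact hmI.ne_top (Ideal.eq_top_of_isUnit_mem _ this isUnit_one)
    rcases hunit with ⟨u, hu⟩
    have hxm : x ∈ m := by
      have h1 : (1 - a * j) • x = y := by
        rw [sub_smul, one_smul, mul_smul]; exact sub_eq_of_eq_add hyz.symm
      have h2 : x = u • ((1 - a * j) • x) := by
        rw [← mul_smul, hu, one_smul]
      rw [h2, h1]
      exact m.smul_mem _ hy
    exact hjx (m.smul_mem j hxm)
  have : (⊤ : Submodule A P) ≤ m := by
    rw [← h]; exact sup_le hNm hJm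
  exact hm.1 (top_le_iff.1 this)

/-- If every map from a small submodule `K` of a f.g. projective `P` into the radical
extends to `P`, then `K = ⊥` (over a left noetherian ring). -/
lemma ker_eq_bot_of_extend [IsNoetherianRing A]
    {P : Type u} [AddCommGroup P] [Module A P] [Module.Finite A P] [Module.Projective A P]
    {K : Submodule A P}
    (hsmall : ∀ N : Submodule A P, N ⊔ K = ⊤ → N = ⊤)
    (hext : ∀ f : ↥K →ₗ[A] ↥((⊥ : Ideal A).jacobson),
      ∃ g : P →ₗ[A] ↥((⊥ : Ideal A).jacobson), g.comp K.subtype = f) :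
    K = ⊥ := by
  classical
  obtain ⟨n, π, hπ⟩ := Module.Finite.exists_fin' A P
  obtain ⟨s, hs⟩ := Module.projective_lifting_property π (LinearMap.id) hπ
  -- coordinates of elements of K lie in the radical
  have hcoord : ∀ (i : Fin n) (k : P), k ∈ K → s k i ∈ (⊥ : Ideal A).jacobson := by
    intro i k hk
    exact small_image_le_jac hsmall ((LinearMap.proj i).comp s) hk
  -- the extensions
  have hfi : ∀ i : Fin n, ∃ g : P →ₗ[A] ↥((⊥ : Ideal A).jacobson),
      ∀ (k : P) (hk : k ∈ K), (g k : A) = s k i := by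
    intro i
    obtain ⟨g, hg⟩ := hext (LinearMap.codRestrict _ (((LinearMap.proj i).comp s).comp K.subtype)
      (fun c => hcoord i c c.2))
    exact ⟨g, fun k hk => by
      have := congrArg (fun (h : ↥K →ₗ[A] ↥((⊥ : Ideal A).jacobson)) => (h ⟨k, hk⟩ : A)) hg
      exact this⟩
  choose g hg using hfi
  set t : P →ₗ[A] (Fin n → A) := LinearMap.pi (fun i => ((⊥ : Ideal A).jacobson).subtype.comp (g i)) with ht
  set G : P →ₗ[A] P := π.comp t with hG
  have hGk : ∀ k ∈ K, G k = k := by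
    intro k hk
    have htk : t k = s k := by
      funext i
      simpa [ht] using hg i k hk
    have : G k = π (s k) := by rw [hG]; simp [htk]
    rw [this, ← LinearMap.comp_apply, hs, LinearMap.id_apply]
  have hGrange : LinearMap.range G ≤ (⊥ : Ideal A).jacobson • (⊤ : Submodule A P) := by
    rintro _ ⟨x, rfl⟩
    have htx : t x ∈ (⊥ : Ideal A).jacobson • (⊤ : Submodule A (Fin n → A)) := by
      have : t x = ∑ i : Fin n, (t x i) • (Pi.single (M := fun _ : Fin n => A) i (1 : A)) := by
        funext j
        simp [Pi.single_apply, Finset.sum_apply]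
      rw [this]
      refine Submodule.sum_mem _ fun i _ => Submodule.smul_mem_smul ?_ Submodule.mem_top
      simpa [ht] using ((g i) x).2
    have : G x = π (t x) := rfl
    rw [this]
    have hmem := Submodule.mem_map_of_mem (f := π) htx
    rw [Submodule.map_smul''] at hmem
    exact smul_mono_right ((⊥ : Ideal A).jacobson) (le_top (a := Submodule.map π ⊤)) hmem
  -- id - G is surjective by Nakayama, hence injective; K ⊆ ker (id - G)
  set u : P →ₗ[A] P := LinearMap.id - G with hu
  have husurj : Function.Surjective u := by
    rw [← LinearMap.range_eq_top]
    apply sup_jac_smul_top_eq_top (A := A)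
    rw [eq_top_iff]
    intro x _
    have hxdecomp : x = u x + G x := by simp [hu]
    rw [hxdecomp]
    exact Submodule.add_mem_sup (LinearMap.mem_range_self u x) (hGrange (LinearMap.mem_range_self G x))
  have huinj : Function.Injective u :=
    IsNoetherian.injective_of_surjective_endomorphism u husurj
  rw [eq_bot_iff]
  intro k hk
  have : u k = 0 := by simp [hu, hGk k hk]
  have : u k = u 0 := by simpa using this
  simpa using huinj this


lemma finite_of_cover {P N : Type u} [AddCommGroup P] [Module A P]
    [AddCommGroup N] [Module A N] (hN : Module.Finite A N)
    (p : P →ₗ[A] N) (hsurj : Function.Surjective p)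
    (hsmall : ∀ L : Submodule A P, L ⊔ LinearMap.ker p = ⊤ → L = ⊤) :
    Module.Finite A P := by
  classical
  obtain ⟨S, hS⟩ := Module.finite_def.1 hN
  set g : N → P := Function.surjInv hsurj with hg
  have hpg : ∀ x : N, p (g x) = x := Function.surjInv_eq hsurj
  set L : Submodule A P := Submodule.span A (g '' S) with hL
  have hLtop : L ⊔ LinearMap.ker p = ⊤ := by
    rw [eq_top_iff]
    intro q _
    have hq : p q ∈ Submodule.map p L := by
      rw [hL, Submodule.map_span, ← Set.image_comp]
      have : (p ∘ g) '' (S : Set N) = (S : Set N) := by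
        ext x; constructor
        · rintro ⟨y, hy, rfl⟩; simpa [Function.comp, hpg] using hy
        · intro hx; exact ⟨x, hx, by simp [Function.comp, hpg]⟩
      rw [this, hS]
      exact Submodule.mem_top
    rcases hq with ⟨l, hl, hlq⟩
    have : q - l ∈ LinearMap.ker p := by
      simp [LinearMap.mem_ker, map_sub, hlq]
    have hq' : q = l + (q - l) := by abel
    rw [hq']
    exact Submodule.add_mem_sup hl this
  have := hsmall L hLtop
  rw [Module.finite_def, ← this, hL]
  exact Submodule.fg_span (Set.Finite.image _ S.finite_toSet)

variable [IsNoetherianRing A]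

lemma exists_good_cover (hA : IsSemiperfectRing A) (N : ModuleCat.{u} A)
    (hN : Module.Finite A N) :
    ∃ (P : ModuleCat.{u} A) (p : P ⟶ N), Module.Projective A P ∧ Module.Finite A P ∧
      Function.Surjective p ∧
      (∀ L : Submodule A P, L ⊔ LinearMap.ker p.hom = ⊤ → L = ⊤) := by
  obtain ⟨P₀, i1, i2, p₀, hcov⟩ := hA N inferInstance inferInstance hN
  obtain ⟨hproj, hsurj, hsmall⟩ := hcov
  refine ⟨ModuleCat.of A P₀, ModuleCat.ofHom p₀, hproj, ?_, hsurj, hsmall⟩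
  exact finite_of_cover hN p₀ hsurj hsmall

variable (hA : IsSemiperfectRing A)

/-- The chosen projective cover. -/
def gcP (N : ModuleCat.{u} A) (hN : Module.Finite A N) : ModuleCat.{u} A :=
  (exists_good_cover hA N hN).choose

def gcp (N : ModuleCat.{u} A) (hN : Module.Finite A N) : gcP hA N hN ⟶ N :=
  (exists_good_cover hA N hN).choose_spec.choose

lemma gc_spec (N : ModuleCat.{u} A) (hN : Module.Finite A N) :
    Module.Projective A (gcP hA N hN) ∧ Module.Finite A (gcP hA N hN) ∧
      Function.Surjective (gcp hA N hN) ∧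
      (∀ L : Submodule A (gcP hA N hN),
        L ⊔ LinearMap.ker (gcp hA N hN).hom = ⊤ → L = ⊤) :=
  (exists_good_cover hA N hN).choose_spec.choose_spec

lemma fin_ker (N : ModuleCat.{u} A) (hN : Module.Finite A N) :
    Module.Finite A ↥(LinearMap.ker (gcp hA N hN).hom) := by
  have : Module.Finite A (gcP hA N hN) := (gc_spec hA N hN).2.1
  have : IsNoetherian A (gcP hA N hN) :=
    isNoetherian_of_isNoetherianRing_of_finite A _
  exact Module.Finite.iff_fg.2 (IsNoetherian.noetherian _)

/-- The tower of syzygies. -/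
def resN (M : ModuleCat.{u} A) (hM : Module.Finite A M) :
    ℕ → Σ' (N : ModuleCat.{u} A), Module.Finite A N
  | 0 => ⟨M, hM⟩
  | n + 1 =>
    ⟨ModuleCat.of A ↥(LinearMap.ker (gcp hA (resN M hM n).1 (resN M hM n).2).hom),
      fin_ker hA _ _⟩

variable (M : ModuleCat.{u} A) (hM : Module.Finite A M)

def rP (n : ℕ) : ModuleCat.{u} A := gcP hA (resN hA M hM n).1 (resN hA M hM n).2

def rp (n : ℕ) : rP hA M hM n ⟶ (resN hA M hM n).1 := gcp hA _ _

lemma resN_succ (n : ℕ) : (resN hA M hM (n + 1)).1 =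
    ModuleCat.of A ↥(LinearMap.ker (rp hA M hM n).hom) := rfl

def rι (n : ℕ) : (resN hA M hM (n + 1)).1 ⟶ rP hA M hM n :=
  ModuleCat.ofHom (LinearMap.ker (rp hA M hM n).hom).subtype

def rd (n : ℕ) : rP hA M hM (n + 1) ⟶ rP hA M hM n :=
  rp hA M hM (n + 1) ≫ rι hA M hM n

lemma rι_rp (n : ℕ) : (rι hA M hM n ≫ rp hA M hM n : _ ⟶ _) = 0 := by
  apply ModuleCat.hom_ext
  apply LinearMap.ext
  rintro ⟨x, hx⟩
  exact hx

lemma rd_rd (n : ℕ) : rd hA M hM (n + 1) ≫ rd hA M hM n = 0 := by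
  dsimp [rd]
  rw [Category.assoc, ← Category.assoc (rι hA M hM (n+1)), rι_rp]
  simp

/-- The minimal projective resolution complex. -/
def rC : ChainComplex (ModuleCat.{u} A) ℕ :=
  ChainComplex.of (rP hA M hM) (rd hA M hM) (rd_rd hA M hM)


lemma rp_surj (n : ℕ) : Function.Surjective (rp hA M hM n) := (gc_spec hA _ _).2.2.1

lemma rp_small (n : ℕ) : ∀ L : Submodule A (rP hA M hM n),
    L ⊔ LinearMap.ker (rp hA M hM n).hom = ⊤ → L = ⊤ := (gc_spec hA _ _).2.2.2

instance rP_projective (n : ℕ) : Projective (rP hA M hM n) := by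
  have h : Module.Projective A (rP hA M hM n) := (gc_spec hA _ _).1
  exact (IsProjective.iff_projective (R := A) (rP hA M hM n)).1 h

lemma rC_X (n : ℕ) : (rC hA M hM).X n = rP hA M hM n := rfl

lemma rC_d (n : ℕ) : (rC hA M hM).d (n + 1) n = rd hA M hM n := ChainComplex.of_d _ _ n

lemma rC_exactAt_succ (n : ℕ) : (rC hA M hM).ExactAt (n + 1) := by
  rw [HomologicalComplex.exactAt_iff' _ (n + 2) (n + 1) n (by simp) (by simp)]
  rw [ShortComplex.moduleCat_exact_iff]
  intro x hx
  have hx2 : rd hA M hM n x = 0 := by rw [← rC_d]; exact hx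
  have hval : rι hA M hM n ((rp hA M hM (n + 1)) x) = 0 := hx2
  have hker : (rp hA M hM (n + 1)) x = 0 := by
    apply Submodule.injective_subtype (LinearMap.ker (rp hA M hM n).hom)
    exact hval.trans (map_zero (LinearMap.ker (rp hA M hM n).hom).subtype).symm
  obtain ⟨y, hy⟩ := rp_surj hA M hM (n + 2)
    (⟨x, LinearMap.mem_ker.2 hker⟩ : ↥(LinearMap.ker (rp hA M hM (n + 1)).hom))
  refine ⟨y, ?_⟩
  show (rC hA M hM).d (n + 2) (n + 1) y = x
  rw [rC_d hA M hM (n + 1)]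
  show rι hA M hM (n + 1) (rp hA M hM (n + 2) y) = x
  rw [hy]
  rfl

def rp0 : rP hA M hM 0 ⟶ M := rp hA M hM 0

lemma rd_rp0 : (rC hA M hM).d 1 0 ≫ rp0 hA M hM = 0 := by
  have h : (rC hA M hM).d 1 0 = rd hA M hM 0 := rC_d hA M hM 0
  rw [h]
  dsimp [rd, rp0]
  show rp hA M hM 1 ≫ rι hA M hM 0 ≫ rp hA M hM 0 = 0
  rw [rι_rp]
  simp

def sc0 : ShortComplex (ModuleCat.{u} A) :=
  ShortComplex.mk (rd hA M hM 0) (rp0 hA M hM) (by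
    dsimp [rd, rp0]
    show rp hA M hM 1 ≫ rι hA M hM 0 ≫ rp hA M hM 0 = 0
    rw [rι_rp]
    simp)

lemma sc0_exact : (sc0 hA M hM).Exact := by
  rw [ShortComplex.moduleCat_exact_iff]
  intro x hx
  have hker : x ∈ LinearMap.ker (rp hA M hM 0).hom := hx
  obtain ⟨y, hy⟩ := rp_surj hA M hM 1
    (⟨x, hker⟩ : ↥(LinearMap.ker (rp hA M hM 0).hom))
  refine ⟨y, ?_⟩
  show rι hA M hM 0 (rp hA M hM 1 y) = x
  rw [hy]
  rfl

lemma sc0_epi : Epi (sc0 hA M hM).g := by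
  rw [ModuleCat.epi_iff_surjective]
  exact rp_surj hA M hM 0

/-- The minimal projective resolution. -/
def minRes : ProjectiveResolution M where
  complex := rC hA M hM
  projective := fun n => by
    show Projective (rP hA M hM n)
    infer_instance
  π := (ChainComplex.toSingle₀Equiv _ _).symm ⟨rp0 hA M hM, rd_rp0 hA M hM⟩
  quasiIso := ⟨fun n => by
    cases n with
    | zero =>
      rw [ChainComplex.quasiIsoAt₀_iff, ShortComplex.quasiIso_iff_of_zeros']
      · refine (ShortComplex.exact_and_epi_g_iff_of_iso
          (S₂ := sc0 hA M hM) ?_).2 ⟨sc0_exact hA M hM, sc0_epi hA M hM⟩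
        refine ShortComplex.isoMk (Iso.refl _) (Iso.refl _) (Iso.refl _) ?_ ?_
        · dsimp [sc0]
          simp [rC_d hA M hM 0]
          rfl
        · dsimp [sc0]
          simp [ChainComplex.toSingle₀Equiv_symm_apply_f_zero]
          rfl
      all_goals rfl
    | succ n =>
      rw [quasiIsoAt_iff_exactAt']
      · exact rC_exactAt_succ hA M hM n
      · exact ChainComplex.exactAt_succ_single_obj _ n⟩

lemma hom_subsingleton {X N : ModuleCat.{u} A} (h : Subsingleton X) :
    Subsingleton (X ⟶ N) := by
  constructor
  intro f g
  apply ModuleCat.hom_ext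
  apply LinearMap.ext
  intro x
  rw [Subsingleton.elim x 0, map_zero, map_zero]

lemma subsingleton_of_isZero {R : Type*} [Ring R] {X : ModuleCat R} (h : IsZero X) :
    Subsingleton X := by
  constructor
  intro a b
  have hid : 𝟙 X = 0 := h.eq_of_src _ _
  have ha : a = (𝟙 X : X ⟶ X) a := rfl
  have hb : b = (𝟙 X : X ⟶ X) b := rfl
  rw [ha, hb, hid]
  rfl

lemma extVanish_of_subsingleton_P (i : ℕ) (hsub : Subsingleton (rP hA M hM i))
    (N : ModuleCat.{u} A) : extVanish A M N i := by
  set D := ((minRes hA M hM).complex.linearYonedaObj ℤ N) with hD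
  have h1 : Subsingleton ((rC hA M hM).X i ⟶ N) := hom_subsingleton hsub
  have h2 : IsZero (D.X i) := @ModuleCat.isZero_of_subsingleton _ _ _ h1
  have h3 : D.ExactAt i := by
    rw [HomologicalComplex.exactAt_iff]
    exact ShortComplex.exact_of_isZero_X₂ _ h2
  have h4 : IsZero (D.homology i) := (HomologicalComplex.exactAt_iff_isZero_homology _ _).1 h3
  have h6 : IsZero (((Ext ℤ (ModuleCat.{u} A) i).obj (op M)).obj N) :=
    h4.of_iso ((minRes hA M hM).isoExt (R := ℤ) i N)
  exact subsingleton_of_isZero h6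

lemma extend_of_extVanish (d : ℕ) (J : ModuleCat.{u} A)
    (hv : extVanish A M J (d + 1))
    (f : (resN hA M hM (d + 1)).1 ⟶ J) :
    ∃ g : rP hA M hM d ⟶ J, rι hA M hM d ≫ g = f := by
  set D := ((minRes hA M hM).complex.linearYonedaObj ℤ J) with hD
  have h6 : IsZero (D.homology (d + 1)) := by
    have h0 : Subsingleton (((Ext ℤ (ModuleCat.{u} A) (d+1)).obj (op M)).obj J) := hv
    have hz : IsZero (((Ext ℤ (ModuleCat.{u} A) (d+1)).obj (op M)).obj J) :=
      @ModuleCat.isZero_of_subsingleton _ _ _ h0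
    exact hz.of_iso ((minRes hA M hM).isoExt (R := ℤ) (d+1) J).symm
  have h3 : D.ExactAt (d + 1) := (HomologicalComplex.exactAt_iff_isZero_homology _ _).2 h6
  rw [HomologicalComplex.exactAt_iff' _ d (d+1) (d+2) (by simp) (by simp),
    ShortComplex.moduleCat_exact_iff] at h3
  have hcocycle : (D.sc' d (d+1) (d+2)).g
      (show (rC hA M hM).X (d+1) ⟶ J from rp hA M hM (d+1) ≫ f) = 0 := by
    show (D.d (d+1) (d+2)) _ = 0
    show ((minRes hA M hM).complex.linearYonedaObj ℤ J).d (d+1) (d+2) _ = 0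
    rw [ChainComplex.linearYonedaObj_d]
    show (rC hA M hM).d (d+2) (d+1) ≫ (rp hA M hM (d+1) ≫ f) = 0
    rw [rC_d hA M hM (d+1)]
    dsimp [rd]
    show rp hA M hM (d + 1 + 1) ≫ (rι hA M hM (d + 1) ≫ rp hA M hM (d + 1)) ≫ f = 0
    rw [rι_rp]
    simp
  obtain ⟨y, hy⟩ := h3 _ hcocycle
  refine ⟨y, ?_⟩
  have hy' : (rC hA M hM).d (d+1) d ≫ (y : (rC hA M hM).X d ⟶ J)
      = rp hA M hM (d+1) ≫ f := by
    have : (D.sc' d (d+1) (d+2)).f y =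
        (show (rC hA M hM).X (d+1) ⟶ J from rp hA M hM (d+1) ≫ f) := hy
    rw [show (D.sc' d (d+1) (d+2)).f = D.d d (d+1) from rfl] at this
    rw [show D.d d (d+1) = ModuleCat.ofHom (Linear.leftComp ℤ J ((rC hA M hM).d (d+1) d))
      from ChainComplex.linearYonedaObj_d _ _ _ _ _] at this
    exact this
  rw [rC_d hA M hM d] at hy'
  have hepi : Epi (rp hA M hM (d+1)) :=
    (ModuleCat.epi_iff_surjective _).2 (rp_surj hA M hM (d+1))
  have : rp hA M hM (d+1) ≫ (rι hA M hM d ≫ (y : rP hA M hM d ⟶ J)) = rp hA M hM (d+1) ≫ f := by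
    exact (Category.assoc _ _ _).symm.trans hy'
  exact (cancel_epi (rp hA M hM (d+1))).1 this

lemma ker_bot_of_extVanish (d : ℕ)
    (hv : extVanish A M (ModuleCat.of A ↥((⊥ : Ideal A).jacobson)) (d + 1)) :
    LinearMap.ker (rp hA M hM d).hom = ⊥ := by
  haveI hfin : Module.Finite A (rP hA M hM d) := (gc_spec hA _ _).2.1
  haveI hproj : Module.Projective A (rP hA M hM d) := (gc_spec hA _ _).1
  apply ker_eq_bot_of_extend (rp_small hA M hM d)
  intro f
  obtain ⟨g, hg⟩ := extend_of_extVanish hA M hM d (ModuleCat.of A ↥((⊥ : Ideal A).jacobson)) hv (ModuleCat.ofHom f)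
  exact ⟨g.hom, congrArg ModuleCat.Hom.hom hg⟩

lemma resN_subsingleton_of_extVanish (d : ℕ)
    (hv : extVanish A M (ModuleCat.of A ↥((⊥ : Ideal A).jacobson)) (d + 1)) :
    ∀ j : ℕ, Subsingleton ((resN hA M hM (d + 1 + j)).1) := by
  intro j
  induction j with
  | zero =>
    have hker := ker_bot_of_extVanish hA M hM d hv
    constructor
    rintro ⟨a, ha⟩ ⟨b, hb⟩
    have ha2 : a ∈ LinearMap.ker (rp hA M hM d).hom := ha
    have hb2 : b ∈ LinearMap.ker (rp hA M hM d).hom := hb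
    rw [hker] at ha2 hb2
    replace ha2 := (Submodule.mem_bot A (M := ↑(rP hA M hM d))).1 ha2
    replace hb2 := (Submodule.mem_bot A (M := ↑(rP hA M hM d))).1 hb2
    exact Subtype.ext (ha2.trans hb2.symm)
  | succ j ih =>
    have hPsub : Subsingleton (rP hA M hM (d + 1 + j)) := by
      have hkertop : LinearMap.ker (rp hA M hM (d + 1 + j)).hom = ⊤ := by
        rw [eq_top_iff]
        intro x _
        have : rp hA M hM (d + 1 + j) x = 0 := Subsingleton.elim _ _
        exact this
      have hbot : (⊥ : Submodule A (rP hA M hM (d + 1 + j))) = ⊤ := by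
        apply rp_small hA M hM (d + 1 + j)
        rw [hkertop]
        simp
      constructor
      intro a b
      have ha : a ∈ (⊥ : Submodule A (rP hA M hM (d + 1 + j))) := by
        rw [hbot]; trivial
      have hb : b ∈ (⊥ : Submodule A (rP hA M hM (d + 1 + j))) := by
        rw [hbot]; trivial
      simp only [Submodule.mem_bot] at ha hb
      rw [ha, hb]
    show Subsingleton ↥(LinearMap.ker (rp hA M hM (d + 1 + j)).hom)
    constructor
    rintro ⟨a, _⟩ ⟨b, _⟩
    simp [Subtype.ext_iff]
    exact Subsingleton.elim _ _

lemma rP_subsingleton_of_extVanish (d : ℕ)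
    (hv : extVanish A M (ModuleCat.of A ↥((⊥ : Ideal A).jacobson)) (d + 1)) :
    ∀ i : ℕ, d + 1 ≤ i → Subsingleton (rP hA M hM i) := by
  intro i hi
  obtain ⟨j, rfl⟩ := Nat.exists_eq_add_of_le hi
  have hsub := resN_subsingleton_of_extVanish hA M hM d hv j
  have hkertop : LinearMap.ker (rp hA M hM (d + 1 + j)).hom = ⊤ := by
    rw [eq_top_iff]
    intro x _
    exact (Subsingleton.elim _ _ : rp hA M hM (d + 1 + j) x = 0)
  have hbot : (⊥ : Submodule A (rP hA M hM (d + 1 + j))) = ⊤ := by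
    apply rp_small hA M hM (d + 1 + j)
    rw [hkertop]
    simp
  constructor
  intro a b
  have ha : a ∈ (⊥ : Submodule A (rP hA M hM (d + 1 + j))) := by rw [hbot]; trivial
  have hb : b ∈ (⊥ : Submodule A (rP hA M hM (d + 1 + j))) := by rw [hbot]; trivial
  simp only [Submodule.mem_bot] at ha hb
  rw [ha, hb]

include hA hM in
/-- The key theorem: vanishing of `Ext^{d+1}(M, J)` implies projective dimension `≤ d`. -/
lemma extVanish_all_of_extVanish_jac (d : ℕ)
    (hv : extVanish A M (ModuleCat.of A ↥((⊥ : Ideal A).jacobson)) (d + 1)) :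
    ∀ (N : ModuleCat.{u} A) (i : ℕ), d < i → extVanish A M N i := by
  intro N i hi
  exact extVanish_of_subsingleton_P hA M hM i
    (rP_subsingleton_of_extVanish hA M hM d hv i hi) N

end Aux4

open Paper in
theorem statement_4 (A : Type u) [Ring A] [IsNoetherianRing A]
    (hA : IsSemiperfectRing A)
    (M : Type u) [AddCommGroup M] [Module A M] [Module.Finite A M] :
    projDim A (ModuleCat.of A M) =
      sSup ({0} ∪ {c : ℕ∞ | ∃ i : ℕ, c = i ∧
        ¬ extVanish A (ModuleCat.of A M) (ModuleCat.of A ↥(jac A)) i}) ∧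
    (projDim A (ModuleCat.of A M) ≠ ⊤ ↔
      ∃ n : ℕ, ∀ i : ℕ, n ≤ i →
        extVanish A (ModuleCat.of A M) (ModuleCat.of A ↥(jac A)) i) := by
  classical
  haveI hMfin : Module.Finite A (ModuleCat.of A M) := ‹Module.Finite A M›
  set MM : ModuleCat.{u} A := ModuleCat.of A M with hMM
  set J : ModuleCat.{u} A := ModuleCat.of A ↥(jac A) with hJ
  have key : ∀ d : ℕ, extVanish A MM J (d + 1) → projDimLE A MM d := by
    intro d hv N i hi
    exact Aux4.extVanish_all_of_extVanish_jac hA MM hMfin d hv N i hi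
  have le1 : sSup ({0} ∪ {c : ℕ∞ | ∃ i : ℕ, c = i ∧ ¬ extVanish A MM J i})
      ≤ projDim A MM := by
    apply sSup_le
    rintro c (hc | ⟨i, rfl, hi⟩)
    · simp only [Set.mem_singleton_iff] at hc
      simp [hc]
    · refine le_sInf ?_
      rintro b ⟨e, rfl, he⟩
      rw [Nat.cast_le]
      by_contra h
      exact hi (he J i (by omega))
  have le2 : projDim A MM ≤
      sSup ({0} ∪ {c : ℕ∞ | ∃ i : ℕ, c = i ∧ ¬ extVanish A MM J i}) := by
    set s := sSup ({0} ∪ {c : ℕ∞ | ∃ i : ℕ, c = i ∧ ¬ extVanish A MM J i}) with hs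
    rcases eq_or_ne s ⊤ with htop | htop
    · rw [htop]; exact le_top
    · obtain ⟨d, hd0⟩ := WithTop.ne_top_iff_exists.1 htop
      have hd : ((d : ℕ) : ℕ∞) = s := by exact_mod_cast hd0
      have hvan : extVanish A MM J (d + 1) := by
        by_contra h
        have hmem : ((d + 1 : ℕ) : ℕ∞) ∈
            ({0} ∪ {c : ℕ∞ | ∃ i : ℕ, c = i ∧ ¬ extVanish A MM J i}) :=
          Or.inr ⟨d + 1, rfl, h⟩
        have h2 := le_sSup hmem
        rw [← hs, ← hd] at h2
        have h3 : (d + 1 : ℕ) ≤ d := by exact_mod_cast h2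
        omega
      have hmem : ((d : ℕ∞)) ∈ {c : ℕ∞ | ∃ e : ℕ, c = e ∧ projDimLE A MM e} :=
        ⟨d, rfl, key d hvan⟩
      have h4 := sInf_le hmem
      calc projDim A MM ≤ ((d : ℕ) : ℕ∞) := h4
        _ = s := hd
  refine ⟨le_antisymm le2 le1, ?_, ?_⟩
  · intro h
    have hne : ¬ ∀ b ∈ {c : ℕ∞ | ∃ e : ℕ, c = e ∧ projDimLE A MM e}, b = ⊤ := by
      intro hall
      exact h (sInf_eq_top.2 hall)
    push_neg at hne
    obtain ⟨b, ⟨e, rfl, he⟩, -⟩ := hne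
    exact ⟨e + 1, fun i hi => he J i (by omega)⟩
  · rintro ⟨n, hn⟩
    have hvan : extVanish A MM J (n + 1) := hn (n + 1) (by omega)
    have hle : projDim A MM ≤ (n : ℕ∞) := sInf_le ⟨n, rfl, key n hvan⟩
    exact (lt_of_le_of_lt hle (WithTop.coe_lt_top n)).ne
end
end
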